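/- For a square matrix A, the matrix recurrence φ_k(A) = A·φ_{k+1}(A) + (1/k!)·I holds for all k ≥ 1, where I is the identity matrix. -/

import Mathlib

open NormedSpace intervalIntegral

noncomputable def phiM {n : ℕ} (k : ℕ) (M : Matrix (Fin n) (Fin n) ℝ) :
    Matrix (Fin n) (Fin n) ℝ :=
  Matrix.of fun i j =>
    ∫ θ in (0:ℝ)..1, θ ^ (k - 1) / (Nat.factorial (k - 1)) * NormedSpace.exp ((1 - θ) • M) i j

theorem phiM_recurrence {n : ℕ} (k : ℕ) (hk : 1 ≤ k) (A : Matrix (Fin n) (Fin n) ℝ) :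
    phiM k A = A * phiM (k + 1) A + (1 / (Nat.factorial k : ℝ)) • (1 : Matrix (Fin n) (Fin n) ℝ) := by
  letI : SeminormedRing (Matrix (Fin n) (Fin n) ℝ) := Matrix.linftyOpSemiNormedRing
  letI : NormedRing (Matrix (Fin n) (Fin n) ℝ) := Matrix.linftyOpNormedRing
  letI : NormedAlgebra ℝ (Matrix (Fin n) (Fin n) ℝ) := Matrix.linftyOpNormedAlgebra
  letI : NormedAlgebra ℚ (Matrix (Fin n) (Fin n) ℝ) := .restrictScalars ℚ ℝ _
  obtain ⟨m, rfl⟩ : ∃ m, k = m + 1 := ⟨k - 1, (Nat.succ_pred_eq_of_pos hk).symm⟩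
  -- entry extraction as a continuous linear map
  have hEcont : Continuous (fun θ : ℝ => exp ((1 - θ) • A)) :=
    exp_continuous.comp ((continuous_const.sub continuous_id).smul continuous_const)
  have hentry : ∀ i j, Continuous (fun M : Matrix (Fin n) (Fin n) ℝ => M i j) := by
    intro i j
    exact (continuous_apply j).comp (continuous_apply i)
  have hE : ∀ (i j : Fin n) (θ : ℝ),
      HasDerivAt (fun t : ℝ => exp ((1 - t) • A) i j)
        (-((A * exp ((1 - θ) • A)) i j)) θ := by
    intro i j θ
    have h1 : HasDerivAt (fun t : ℝ => 1 - t) (-1) θ :=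
      (hasDerivAt_id θ).const_sub 1
    have h2 := (hasDerivAt_exp_smul_const' (𝕂 := ℝ) A (1 - θ)).scomp θ h1
    let L : Matrix (Fin n) (Fin n) ℝ →ₗ[ℝ] ℝ :=
      { toFun := fun M => M i j, map_add' := fun _ _ => rfl,
        map_smul' := fun _ _ => rfl }
    have hL := (LinearMap.toContinuousLinearMap L).hasFDerivAt
      (x := exp ((1 - θ) • A))
    have := hL.comp_hasDerivAt θ h2
    exact this.congr_deriv (by simp [L]; rfl)
  have hAE : ∀ i j : Fin n, Continuous (fun θ : ℝ => (A * exp ((1 - θ) • A)) i j) := by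
    intro i j
    exact (hentry i j).comp (continuous_const.mul hEcont)
  have hEij : ∀ i j : Fin n, Continuous (fun θ : ℝ => exp ((1 - θ) • A) i j) := by
    intro i j
    exact (hentry i j).comp hEcont
  have key : ∀ i j : Fin n,
      (∫ θ in (0:ℝ)..1, (θ ^ m / (Nat.factorial m) * exp ((1 - θ) • A) i j
        - θ ^ (m + 1) / (Nat.factorial (m + 1)) * (A * exp ((1 - θ) • A)) i j))
      = (1 / (Nat.factorial (m + 1) : ℝ)) * (1 : Matrix (Fin n) (Fin n) ℝ) i j := by
    intro i j
    have hderiv : ∀ θ ∈ Set.uIcc (0:ℝ) 1,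
        HasDerivAt (fun t : ℝ => t ^ (m + 1) / (Nat.factorial (m + 1)) * exp ((1 - t) • A) i j)
          (θ ^ m / (Nat.factorial m) * exp ((1 - θ) • A) i j
            - θ ^ (m + 1) / (Nat.factorial (m + 1)) * (A * exp ((1 - θ) • A)) i j) θ := by
      intro θ _
      have h1 : HasDerivAt (fun t : ℝ => t ^ (m + 1) / (Nat.factorial (m + 1)))
          ((↑(m + 1) * θ ^ m) / (Nat.factorial (m + 1))) θ :=
        (hasDerivAt_pow (m + 1) θ).div_const _
      have := h1.mul (hE i j θ)
      convert this using 1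
      · rfl
      · rfl
      · rfl
      have hfac : ((Nat.factorial (m + 1) : ℝ)) = (m + 1) * Nat.factorial m := by
        push_cast [Nat.factorial_succ]; ring
      have hm : (Nat.factorial m : ℝ) ≠ 0 := Nat.cast_ne_zero.mpr (Nat.factorial_ne_zero m)
      have hm1 : ((m : ℝ) + 1) ≠ 0 := by positivity
      rw [hfac]
      push_cast
      field_simp
      ring
    have hint : IntervalIntegrable (fun θ : ℝ =>
        θ ^ m / (Nat.factorial m) * exp ((1 - θ) • A) i j
          - θ ^ (m + 1) / (Nat.factorial (m + 1)) * (A * exp ((1 - θ) • A)) i j)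
        MeasureTheory.volume 0 1 := by
      apply Continuous.intervalIntegrable
      exact ((continuous_pow m).div_const _ |>.mul (hEij i j)).sub
        ((continuous_pow (m+1)).div_const _ |>.mul (hAE i j))
    have := intervalIntegral.integral_eq_sub_of_hasDerivAt hderiv hint
    rw [this]
    simp [exp_zero]
  ext i j
  have hL : phiM (m + 1) A i j
      = ∫ θ in (0:ℝ)..1, θ ^ m / (Nat.factorial m) * exp ((1 - θ) • A) i j := by
    simp [phiM]
  have hR : (A * phiM (m + 1 + 1) A) i j
      = ∫ θ in (0:ℝ)..1, θ ^ (m + 1) / (Nat.factorial (m + 1)) * (A * exp ((1 - θ) • A)) i j := by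
    rw [Matrix.mul_apply]
    have h1 : ∀ l : Fin n, A i l * phiM (m + 1 + 1) A l j
        = ∫ θ in (0:ℝ)..1, A i l * (θ ^ (m + 1) / (Nat.factorial (m + 1)) * exp ((1 - θ) • A) l j) := by
      intro l
      simp only [phiM, Matrix.of_apply, Nat.add_sub_cancel]
      rw [← intervalIntegral.integral_const_mul]
    simp_rw [h1]
    rw [← intervalIntegral.integral_finset_sum]
    · congr 1
      ext θ
      rw [Matrix.mul_apply, Finset.mul_sum]
      congr 1
      ext l
      ring
    · intro l _
      apply Continuous.intervalIntegrable
      exact continuous_const.mul (((continuous_pow (m+1)).div_const _).mul (hEij l j))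
  have hsub := key i j
  have hi1 : IntervalIntegrable (fun θ : ℝ =>
      θ ^ m / (Nat.factorial m) * exp ((1 - θ) • A) i j) MeasureTheory.volume 0 1 :=
    (((continuous_pow m).div_const _).mul (hEij i j)).intervalIntegrable _ _
  have hi2 : IntervalIntegrable (fun θ : ℝ =>
      θ ^ (m + 1) / (Nat.factorial (m + 1)) * (A * exp ((1 - θ) • A)) i j)
      MeasureTheory.volume 0 1 :=
    (((continuous_pow (m+1)).div_const _).mul (hAE i j)).intervalIntegrable _ _
  rw [intervalIntegral.integral_sub hi1 hi2] at hsub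
  rw [Matrix.add_apply, hL, hR, Matrix.smul_apply]
  rw [smul_eq_mul]
  linarith [hsub]
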